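/- Let K be a field, h(x), g(x) ∈ K[x] with gcd(h,g) = 1, h having a simple root α in K̄, and f₁,...,fₙ ∈ K[x] distinct polynomials with Σᵢ deg fᵢ > 0. Then F(x,y) = h(x)·∏ᵢ₌₁ⁿ(y − fᵢ(x)) + g(x) is absolutely irreducible (provided it is primitive as a polynomial in y over K[x]). -/
import Mathlib

open Polynomial

section Aux

variable {K : Type*} [Field K]

/-- Primitivity is preserved under mapping along a field embedding of coefficients. -/
lemma aux_prim_map (φ₀ : K →+* (AlgebraicClosure K)) (F : Polynomial (Polynomial K))
    (hprim : F.IsPrimitive) :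
    (F.map (Polynomial.mapRingHom φ₀)).IsPrimitive := by
  set φ := Polynomial.mapRingHom φ₀
  -- the ideal generated by the coefficients of F is ⊤
  have htop : Ideal.span (Set.range F.coeff) = ⊤ := by
    obtain ⟨d, hd⟩ := (IsPrincipalIdealRing.principal (Ideal.span (Set.range F.coeff))).principal
    have hdvd : ∀ i, d ∣ F.coeff i := by
      intro i
      rw [← Ideal.mem_span_singleton, ← Ideal.submodule_span_eq, ← hd]
      exact Ideal.subset_span ⟨i, rfl⟩
    have : IsUnit d := hprim d ((C_dvd_iff_dvd_coeff d F).mpr hdvd)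
    rw [hd, Ideal.submodule_span_eq, Ideal.span_singleton_eq_top.mpr this]
  intro r hr
  have hrc : ∀ i, r ∣ (F.map φ).coeff i := (C_dvd_iff_dvd_coeff r _).mp hr
  have hle : Ideal.span (φ '' Set.range F.coeff) ≤ Ideal.span {r} := by
    rw [Ideal.span_le]
    rintro x ⟨c, ⟨i, rfl⟩, rfl⟩
    rw [SetLike.mem_coe, Ideal.mem_span_singleton]
    simpa [Polynomial.coeff_map] using hrc i
  have h1 : (1 : Polynomial (AlgebraicClosure K)) ∈ Ideal.span {r} := by
    apply hle
    rw [← Ideal.map_span φ, htop]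
    simp [Ideal.map_top]
  rw [Ideal.mem_span_singleton] at h1
  exact isUnit_of_dvd_one h1

end Aux

/-- Corollary 3.6 a): if `gcd(h,g) = 1`, `h` has a simple root in the algebraic
closure, and `f₁,…,fₙ` are distinct with `Σ deg fᵢ > 0`, then
`F(x,y) = h(x)·∏(y - fᵢ(x)) + g(x)`, provided it is primitive in `y`, is
absolutely irreducible. -/
theorem stmt18 {K : Type*} [Field K] (n : ℕ) (h g : Polynomial K)
    (hcop : IsRelPrime h g)
    (hroot : ∃ α : AlgebraicClosure K,
      rootMultiplicity α (h.map (algebraMap K (AlgebraicClosure K))) = 1)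
    (f : Fin n → Polynomial K) (hinj : Function.Injective f)
    (hdeg : 0 < ∑ i, (f i).natDegree)
    (hprim : (Polynomial.C h * ∏ i, (Polynomial.X - Polynomial.C (f i)) +
      Polynomial.C g).IsPrimitive) :
    Irreducible ((Polynomial.C h * ∏ i, (Polynomial.X - Polynomial.C (f i)) +
        Polynomial.C g).map
      (Polynomial.mapRingHom (algebraMap K (AlgebraicClosure K)))) := by
  classical
  set Kb := AlgebraicClosure K with hKb
  set φ₀ : K →+* Kb := algebraMap K Kb with hφ₀
  set φ : Polynomial K →+* Polynomial Kb := Polynomial.mapRingHom φ₀ with hφ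
  set h' : Polynomial Kb := h.map φ₀ with hh'
  set g' : Polynomial Kb := g.map φ₀ with hg'
  obtain ⟨α, hα⟩ := hroot
  have hn : 0 < n := by
    by_contra hn
    interval_cases n
    simp at hdeg
  -- basic facts about h', g', α
  have hh0 : h' ≠ 0 := by
    intro h0
    rw [h0, Polynomial.rootMultiplicity_zero] at hα
    omega
  have hαroot : h'.IsRoot α := by
    rw [← Polynomial.rootMultiplicity_pos hh0, hα]
    omega
  have hgα : g'.eval α ≠ 0 := by
    have hc : IsCoprime (h'.eval α) (g'.eval α) := by
      have := hcop.isCoprime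
      exact (this.map ((Polynomial.evalRingHom α).comp φ))
    rw [hαroot] at hc
    rw [isCoprime_zero_left] at hc
    exact hc.ne_zero
  -- the prime ideal
  set P : Ideal (Polynomial Kb) := Ideal.span {Polynomial.X - Polynomial.C α} with hP
  have hPprime : P.IsPrime := by
    rw [hP, Ideal.span_singleton_prime (Polynomial.X_sub_C_ne_zero α)]
    exact (Polynomial.irreducible_X_sub_C α).prime
  have hhP : h' ∈ P := by
    rw [hP, Ideal.mem_span_singleton]
    exact Polynomial.dvd_iff_isRoot.mpr hαroot
  have hhP2 : h' ∉ P ^ 2 := by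
    rw [hP, Ideal.span_singleton_pow, Ideal.mem_span_singleton]
    intro hdvd
    have := (Polynomial.le_rootMultiplicity_iff hh0 (n := 2)).mpr hdvd
    rw [hα] at this
    omega
  have hgP : ∀ c : Polynomial Kb, c.eval α ≠ 0 → c ∉ P := by
    intro c hc hmem
    rw [hP, Ideal.mem_span_singleton, Polynomial.dvd_iff_isRoot] at hmem
    exact hc hmem
  -- set up A = mapped polynomial
  set F : Polynomial (Polynomial K) :=
    Polynomial.C h * ∏ i, (Polynomial.X - Polynomial.C (f i)) + Polynomial.C g with hF
  set Q : Polynomial (Polynomial Kb) :=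
    ∏ i, (Polynomial.X - Polynomial.C ((f i).map φ₀)) with hQ
  have hAeq : F.map φ = Polynomial.C h' * Q + Polynomial.C g' := by
    rw [hF, hQ]
    simp only [Polynomial.map_add, Polynomial.map_mul, Polynomial.map_prod,
      Polynomial.map_sub, Polynomial.map_C, Polynomial.map_X]
    rfl
  set A : Polynomial (Polynomial Kb) := F.map φ with hA
  -- facts about Q
  have hQmonic : Q.Monic := monic_prod_of_monic _ _ (fun i _ => monic_X_sub_C _)
  have hQdeg : Q.natDegree = n := by
    rw [hQ, Polynomial.natDegree_prod _ _ (fun i _ => X_sub_C_ne_zero _)]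
    simp
  -- coefficients of A
  have hAcoeff : ∀ k, A.coeff k = h' * Q.coeff k + (if k = 0 then g' else 0) := by
    intro k
    rw [hAeq]
    simp [Polynomial.coeff_add, Polynomial.coeff_C_mul, Polynomial.coeff_C]
  have heval : h'.eval α = 0 := hαroot
  have hAdeg : A.natDegree = n := by
    rw [hAeq, natDegree_add_C,
      Polynomial.natDegree_mul (by simpa using hh0) hQmonic.ne_zero,
      Polynomial.natDegree_C, hQdeg, zero_add]
  have hAcoeff0' : A.coeff 0 = h' * Q.coeff 0 + g' := by
    rw [hAcoeff 0]; simp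
  have hAcoeff0 : A.coeff 0 ≠ 0 := by
    intro h0
    rw [hAcoeff0'] at h0
    have : (h' * Q.coeff 0 + g').eval α = 0 := by rw [h0]; simp
    rw [Polynomial.eval_add, Polynomial.eval_mul, heval, zero_mul, zero_add] at this
    exact hgα this
  have hA0 : A ≠ 0 := fun h0 => hAcoeff0 (by rw [h0]; simp)
  -- the reverse polynomial G
  set G : Polynomial (Polynomial Kb) := A.reverse with hG
  have hAtr : A.natTrailingDegree = 0 :=
    Polynomial.natTrailingDegree_eq_zero_of_constantCoeff_ne_zero hAcoeff0
  have hGdeg : G.natDegree = n := by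
    rw [hG, Polynomial.reverse_natDegree, hAtr, hAdeg, Nat.sub_zero]
  have hGcoeff : ∀ k, k ≤ n → G.coeff k = A.coeff (n - k) := by
    intro k hk
    rw [hG, Polynomial.coeff_reverse, hAdeg, Polynomial.revAt_le hk]
  have hG0 : G ≠ 0 := fun h0 => hA0 (Polynomial.reverse_eq_zero.mp h0)
  -- Eisenstein hypotheses for G
  have hGlead : G.leadingCoeff ∉ P := by
    rw [Polynomial.leadingCoeff, hGdeg, hGcoeff n le_rfl, Nat.sub_self]
    apply hgP
    rw [hAcoeff0', Polynomial.eval_add, Polynomial.eval_mul, heval, zero_mul, zero_add]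
    exact hgα
  have hGmem : ∀ k : ℕ, (k : WithBot ℕ) < G.degree → G.coeff k ∈ P := by
    intro k hk
    rw [Polynomial.degree_eq_natDegree hG0, hGdeg] at hk
    have hkn : k < n := by exact_mod_cast hk
    rw [hGcoeff k hkn.le, hAcoeff (n - k)]
    have : n - k ≠ 0 := by omega
    rw [if_neg this, add_zero]
    exact P.mul_mem_right _ hhP
  have hGdeg0 : (0 : WithBot ℕ) < G.degree := by
    rw [Polynomial.degree_eq_natDegree hG0, hGdeg]
    exact_mod_cast hn
  have hG0coeff : G.coeff 0 ∉ P ^ 2 := by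
    rw [hGcoeff 0 (Nat.zero_le n), Nat.sub_zero, hAcoeff n]
    rw [if_neg hn.ne', add_zero]
    have : Q.coeff n = 1 := by
      rw [← hQdeg]; exact hQmonic.coeff_natDegree
    rw [this, mul_one]
    exact hhP2
  -- primitivity
  have hAprim : A.IsPrimitive := aux_prim_map φ₀ F hprim
  have hGprim : G.IsPrimitive := by
    intro r hr
    apply hAprim r
    rw [C_dvd_iff_dvd_coeff]
    intro i
    rcases le_or_gt i n with hi | hi
    · have := (C_dvd_iff_dvd_coeff r G).mp hr (n - i)
      rwa [hGcoeff (n - i) (Nat.sub_le n i), Nat.sub_sub_self hi] at this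
    · rw [Polynomial.coeff_eq_zero_of_natDegree_lt (by omega : A.natDegree < i)]
      exact dvd_zero r
  -- G is irreducible by Eisenstein
  have hGirr : Irreducible G :=
    Polynomial.irreducible_of_eisenstein_criterion hPprime hGlead hGmem hGdeg0 hG0coeff hGprim
  -- transfer: A irreducible
  constructor
  · intro hu
    have := Polynomial.natDegree_eq_zero_of_isUnit hu
    rw [hAdeg] at this
    omega
  · intro p q hpq
    have hrev : G = p.reverse * q.reverse := by
      rw [hG, hpq, Polynomial.reverse_mul_of_domain]
    have hp0 : p.coeff 0 ≠ 0 := by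
      intro h0
      apply hAcoeff0
      rw [hpq, Polynomial.mul_coeff_zero, h0, zero_mul]
    have hq0 : q.coeff 0 ≠ 0 := by
      intro h0
      apply hAcoeff0
      rw [hpq, Polynomial.mul_coeff_zero, h0, mul_zero]
    rcases hGirr.isUnit_or_isUnit hrev with hu | hu
    · left
      have hd : p.reverse.natDegree = 0 := Polynomial.natDegree_eq_zero_of_isUnit hu
      rw [Polynomial.reverse_natDegree,
        Polynomial.natTrailingDegree_eq_zero_of_constantCoeff_ne_zero hp0, Nat.sub_zero] at hd
      obtain ⟨a, ha⟩ := Polynomial.natDegree_eq_zero.mp hd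
      rw [← ha] at hu ⊢
      rwa [Polynomial.reverse_C] at hu
    · right
      have hd : q.reverse.natDegree = 0 := Polynomial.natDegree_eq_zero_of_isUnit hu
      rw [Polynomial.reverse_natDegree,
        Polynomial.natTrailingDegree_eq_zero_of_constantCoeff_ne_zero hq0, Nat.sub_zero] at hd
      obtain ⟨a, ha⟩ := Polynomial.natDegree_eq_zero.mp hd
      rw [← ha] at hu ⊢
      rwa [Polynomial.reverse_C] at hu
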